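/- Let α : ℝ → ℝ be a locally Lipschitz extended class K function. Then there exists a function β : ℝ → ℝ → ℝ, depending only on α, such that: (i) for each fixed t ≥ 0 the map s ↦ β s t is strictly increasing on [0,∞) with β 0 t = 0; (ii) for each fixed s ≥ 0 the map t ↦ β s t is nonincreasing on [0,∞) and tends to 0 as t → ∞; and (iii) for all real numbers t₀ < t_f and every continuously differentiable function z : ℝ → ℝ satisfying z(t₀) ≥ 0 and z'(t) ≥ -α(z(t)) for all t ∈ [t₀, t_f), one has z(t) ≥ β (z t₀) (t - t₀) for all t ∈ [t₀, t_f). -/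

import Mathlib

open Set Filter

/-- Comparison lemma (Lemma 1): a locally Lipschitz extended class K function `α`
furnishes a class KL-type lower bound `β`, depending only on `α`, for every continuously
differentiable `z` satisfying the differential inequality `z' ≥ -α ∘ z`. -/
lemma KL_linbound (α : ℝ → ℝ) (hα_lip : LocallyLipschitz α) (hα_zero : α 0 = 0) :
    ∀ r : ℝ, ∃ C : ℝ, 1 ≤ C ∧ ∀ x ∈ Icc (0:ℝ) r, α x ≤ C * x := by
  obtain ⟨K₀, t, ht, hlip⟩ := hα_lip 0
  obtain ⟨ε, hε, hball⟩ := Metric.mem_nhds_iff.1 ht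
  set δ : ℝ := ε / 2 with hδdef
  have hδpos : 0 < δ := by positivity
  have h0t : (0:ℝ) ∈ t := hball (Metric.mem_ball_self hε)
  have hsmall : ∀ x ∈ Icc (0:ℝ) δ, α x ≤ (K₀ : ℝ) * x := by
    intro x hx
    have hxt : x ∈ t := by
      apply hball
      simp only [Metric.mem_ball, Real.dist_eq, sub_zero]
      rw [abs_of_nonneg hx.1]
      linarith [hx.2]
    have h := hlip.dist_le_mul x hxt 0 h0t
    rw [Real.dist_eq, Real.dist_eq, hα_zero, sub_zero, sub_zero, abs_of_nonneg hx.1] at h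
    calc α x ≤ |α x| := le_abs_self _
      _ ≤ (K₀ : ℝ) * x := h
  intro r
  rcases le_or_gt r δ with hr | hr
  · refine ⟨max 1 (K₀ : ℝ), le_max_left _ _, fun x hx => ?_⟩
    calc α x ≤ (K₀ : ℝ) * x := hsmall x ⟨hx.1, hx.2.trans hr⟩
      _ ≤ max 1 (K₀ : ℝ) * x := mul_le_mul_of_nonneg_right (le_max_right _ _) hx.1
  · have hcomp : IsCompact (Icc δ r) := isCompact_Icc
    obtain ⟨M, hM⟩ := hcomp.exists_bound_of_continuousOn (hα_lip.continuous.continuousOn)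
    have hMnn : 0 ≤ M := le_trans (norm_nonneg _) (hM δ ⟨le_refl δ, hr.le⟩)
    refine ⟨max 1 (max (K₀ : ℝ) (M / δ)), le_max_left _ _, fun x hx => ?_⟩
    rcases le_or_gt x δ with hxδ | hxδ
    · calc α x ≤ (K₀ : ℝ) * x := hsmall x ⟨hx.1, hxδ⟩
        _ ≤ _ := mul_le_mul_of_nonneg_right ((le_max_left _ _).trans (le_max_right _ _)) hx.1
    · have h1 : α x ≤ M := by
        calc α x ≤ |α x| := le_abs_self _
          _ ≤ M := hM x ⟨hxδ.le, hx.2⟩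
      have h2 : M ≤ (M / δ) * x := by
        rw [div_mul_eq_mul_div, le_div_iff₀ hδpos]
        nlinarith
      calc α x ≤ (M / δ) * x := h1.trans h2
        _ ≤ _ := mul_le_mul_of_nonneg_right ((le_max_right _ _).trans (le_max_right _ _)) hx.1

lemma KL_fence (α : ℝ → ℝ) (hα_mono : StrictMono α) (hα_zero : α 0 = 0)
    (K r : ℝ) (hK : 0 < K) (hr : 0 ≤ r) (hlin : ∀ x ∈ Icc (0:ℝ) r, α x ≤ K * x)
    (t₀ t_f : ℝ) (z : ℝ → ℝ) (hz : ContDiff ℝ 1 z) (hz0 : r ≤ z t₀)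
    (hineq : ∀ u ∈ Ico t₀ t_f, deriv z u ≥ -α (z u))
    (t : ℝ) (ht : t ∈ Ico t₀ t_f) :
    r * Real.exp (-(K * (t - t₀))) ≤ z t := by
  have hzdiff : Differentiable ℝ z := hz.differentiable one_ne_zero
  have hmain : ∀ ε : ℝ, 0 < ε →
      r * Real.exp (-(K * (t - t₀))) - ε * Real.exp (K * (t - t₀)) ≤ z t := by
    intro ε hε
    set B : ℝ → ℝ := fun u => -(r * Real.exp (-(K * (u - t₀)))) + ε * Real.exp (K * (u - t₀))
      with hBdef
    set B' : ℝ → ℝ := fun u =>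
        K * (r * Real.exp (-(K * (u - t₀)))) + ε * (K * Real.exp (K * (u - t₀))) with hB'def
    have hB : ∀ u, HasDerivAt B (B' u) u := by
      intro u
      have hlin1 : HasDerivAt (fun u : ℝ => -(K * (u - t₀))) (-K) u := by
        have := ((hasDerivAt_id u).sub_const t₀).const_mul (-K)
        simpa [neg_mul] using this
      have hlin2 : HasDerivAt (fun u : ℝ => K * (u - t₀)) K u := by
        have := ((hasDerivAt_id u).sub_const t₀).const_mul K
        simpa using this
      have h1 : HasDerivAt (fun u : ℝ => -(r * Real.exp (-(K * (u - t₀)))))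
          (K * (r * Real.exp (-(K * (u - t₀))))) u := by
        have := ((hlin1.exp).const_mul r).neg
        exact this.congr_deriv (by ring)
      have h2 : HasDerivAt (fun u : ℝ => ε * Real.exp (K * (u - t₀)))
          (ε * (K * Real.exp (K * (u - t₀)))) u := by
        have := (hlin2.exp).const_mul ε
        exact this.congr_deriv (by ring)
      exact h1.add h2
    have hfence := image_le_of_deriv_right_lt_deriv_boundary
      (f := fun u => -z u) (f' := fun u => -deriv z u) (a := t₀) (b := t)
      (B := B) (B' := B')
      (hzdiff.continuous.neg.continuousOn)
      (fun x _ => ((hzdiff x).hasDerivAt.neg).hasDerivWithinAt)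
      (by
        simp only [hBdef, sub_self, mul_zero, neg_zero, Real.exp_zero, mul_one]
        linarith)
      hB
      (by
        intro x hx hfx
        have hxIco : x ∈ Ico t₀ t_f := ⟨hx.1, hx.2.trans ht.2⟩
        have hd : -deriv z x ≤ α (z x) := by linarith [hineq x hxIco]
        have hzx : z x = r * Real.exp (-(K * (x - t₀))) - ε * Real.exp (K * (x - t₀)) := by
          simp only [hBdef] at hfx
          linarith
        have he2pos : 0 < Real.exp (K * (x - t₀)) := Real.exp_pos _
        have he1pos : 0 < Real.exp (-(K * (x - t₀))) := Real.exp_pos _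
        rcases lt_or_ge (z x) 0 with hneg | hnn
        · have : α (z x) < α 0 := hα_mono hneg
          rw [hα_zero] at this
          have hB'pos : 0 < K * (r * Real.exp (-(K * (x - t₀)))) +
              ε * (K * Real.exp (K * (x - t₀))) := by positivity
          simp only [hB'def]
          linarith
        · have hle1 : Real.exp (-(K * (x - t₀))) ≤ 1 := by
            rw [Real.exp_le_one_iff]
            have : 0 ≤ K * (x - t₀) := mul_nonneg hK.le (by linarith [hx.1])
            linarith
          have hzxr : z x ≤ r := by
            rw [hzx]
            nlinarith
          have := hlin (z x) ⟨hnn, hzxr⟩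
          have hB'eq : B' x = K * (z x) + 2 * (ε * (K * Real.exp (K * (x - t₀)))) := by
            simp only [hB'def]
            rw [hzx]
            ring
          have hpos2 : 0 < ε * (K * Real.exp (K * (x - t₀))) := by positivity
          calc -deriv z x ≤ α (z x) := hd
            _ ≤ K * z x := this
            _ < B' x := by rw [hB'eq]; linarith)
    have := hfence (right_mem_Icc.2 ht.1)
    simp only [hBdef] at this
    linarith
  apply le_of_forall_pos_le_add
  intro δ hδ
  have hC : 0 < Real.exp (K * (t - t₀)) := Real.exp_pos _
  have := hmain (δ / Real.exp (K * (t - t₀))) (by positivity)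
  rw [div_mul_cancel₀] at this
  · linarith
  · exact hC.ne'

theorem comparison_KL_bound
    (α : ℝ → ℝ) (hα_lip : LocallyLipschitz α) (hα_mono : StrictMono α) (hα_zero : α 0 = 0) :
    ∃ β : ℝ → ℝ → ℝ,
      -- (i) for each fixed `t ≥ 0`, `s ↦ β s t` is strictly increasing on `[0,∞)` with `β 0 t = 0`
      (∀ t : ℝ, 0 ≤ t → StrictMonoOn (fun s => β s t) (Set.Ici 0) ∧ β 0 t = 0) ∧
      -- (ii) for each fixed `s ≥ 0`, `t ↦ β s t` is nonincreasing on `[0,∞)` and tends to `0`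
      (∀ s : ℝ, 0 ≤ s → AntitoneOn (fun t => β s t) (Set.Ici 0) ∧
        Tendsto (fun t => β s t) atTop (nhds 0)) ∧
      -- (iii) the comparison estimate
      (∀ t₀ t_f : ℝ, t₀ < t_f → ∀ z : ℝ → ℝ, ContDiff ℝ 1 z →
        0 ≤ z t₀ →
        (∀ t ∈ Set.Ico t₀ t_f, deriv z t ≥ -α (z t)) →
        ∀ t ∈ Set.Ico t₀ t_f, z t ≥ β (z t₀) (t - t₀)) := by
  classical
  choose K hK1 hKle using KL_linbound α hα_lip hα_zero
  have hKpos : ∀ r, (0:ℝ) < K r := fun r => lt_of_lt_of_le one_pos (hK1 r)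
  set E : ℝ → ℝ → ℝ := fun r t => r * Real.exp (-(K r * t)) with hEdef
  set S : ℝ → ℝ → Set ℝ := fun s t => (fun r => E r t) '' Icc 0 s with hSdef
  have hmem0 : ∀ s t : ℝ, 0 ≤ s → (0:ℝ) ∈ S s t := by
    intro s t hs
    exact ⟨0, ⟨le_refl 0, hs⟩, by simp [hEdef]⟩
  have hne : ∀ s t : ℝ, 0 ≤ s → (S s t).Nonempty := fun s t hs => ⟨0, hmem0 s t hs⟩
  have hEle : ∀ r t : ℝ, 0 ≤ r → 0 ≤ t → E r t ≤ r := by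
    intro r t hr ht
    have h1 : Real.exp (-(K r * t)) ≤ 1 := by
      rw [Real.exp_le_one_iff]
      have : 0 ≤ K r * t := mul_nonneg (hKpos r).le ht
      linarith
    calc E r t = r * Real.exp (-(K r * t)) := rfl
      _ ≤ r * 1 := mul_le_mul_of_nonneg_left h1 hr
      _ = r := mul_one r
  have hbdd : ∀ s t : ℝ, 0 ≤ t → BddAbove (S s t) := by
    intro s t ht
    refine ⟨s, ?_⟩
    rintro x ⟨r, hrmem, rfl⟩
    exact (hEle r t hrmem.1 ht).trans hrmem.2
  have hSupNN : ∀ s t : ℝ, 0 ≤ s → 0 ≤ t → 0 ≤ sSup (S s t) := by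
    intro s t hs ht
    exact le_csSup (hbdd s t ht) (hmem0 s t hs)
  have hSupGE : ∀ s t : ℝ, 0 ≤ s → 0 ≤ t → E s t ≤ sSup (S s t) := by
    intro s t hs ht
    exact le_csSup (hbdd s t ht) ⟨s, ⟨hs, le_refl s⟩, rfl⟩
  have hfact_le_one : ∀ s : ℝ, 1 - Real.exp (-s) ≤ 1 := by
    intro s; have := Real.exp_pos (-s); linarith
  have hfact_nn : ∀ s : ℝ, 0 ≤ s → 0 ≤ 1 - Real.exp (-s) := by
    intro s hs
    have : Real.exp (-s) ≤ 1 := by rw [Real.exp_le_one_iff]; linarith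
    linarith
  refine ⟨fun s t => (1 - Real.exp (-s)) * sSup (S s t), ?_, ?_, ?_⟩
  · -- (i)
    intro t ht
    constructor
    · intro s₁ hs₁ s₂ hs₂ h12
      simp only [mem_Ici] at hs₁ hs₂
      have hs₂pos : 0 < s₂ := lt_of_le_of_lt hs₁ h12
      have hEs₂ : 0 < E s₂ t := by
        have := Real.exp_pos (-(K s₂ * t)); simp only [hEdef]; positivity
      have hsup2 : 0 < sSup (S s₂ t) := lt_of_lt_of_le hEs₂ (hSupGE s₂ t hs₂pos.le ht)
      have hf2pos : 0 < 1 - Real.exp (-s₂) := by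
        have : Real.exp (-s₂) < 1 := by rw [Real.exp_lt_one_iff]; linarith
        linarith
      rcases eq_or_lt_of_le hs₁ with h | h
      · simp only [← h, neg_zero, Real.exp_zero, sub_self, zero_mul]
        positivity
      · have hEs₁ : 0 < E s₁ t := by
          have := Real.exp_pos (-(K s₁ * t)); simp only [hEdef]; positivity
        have hsup1 : 0 < sSup (S s₁ t) := lt_of_lt_of_le hEs₁ (hSupGE s₁ t hs₁ ht)
        have hfactlt : 1 - Real.exp (-s₁) < 1 - Real.exp (-s₂) :=
          sub_lt_sub_left (Real.exp_lt_exp.2 (neg_lt_neg h12)) 1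
        have hsuple : sSup (S s₁ t) ≤ sSup (S s₂ t) :=
          csSup_le_csSup (hbdd s₂ t ht) (hne s₁ t hs₁)
            (image_mono (Icc_subset_Icc_right h12.le))
        exact mul_lt_mul hfactlt hsuple hsup1 hf2pos.le
    · simp only [neg_zero, Real.exp_zero, sub_self, zero_mul]
  · -- (ii)
    intro s hs
    constructor
    · intro t₁ ht₁ t₂ ht₂ h12
      simp only [mem_Ici] at ht₁ ht₂
      apply mul_le_mul_of_nonneg_left _ (hfact_nn s hs)
      apply csSup_le (hne s t₂ hs)
      rintro x ⟨r, hrmem, rfl⟩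
      have hEle2 : E r t₂ ≤ E r t₁ := by
        have hexp : Real.exp (-(K r * t₂)) ≤ Real.exp (-(K r * t₁)) := by
          apply Real.exp_le_exp.2
          have := mul_le_mul_of_nonneg_left h12 (hKpos r).le
          linarith
        exact mul_le_mul_of_nonneg_left hexp hrmem.1
      exact hEle2.trans (le_csSup (hbdd s t₁ ht₁) ⟨r, hrmem, rfl⟩)
    · apply squeeze_zero' (g := fun t => s * Real.exp (-t))
      · filter_upwards [eventually_ge_atTop (0:ℝ)] with t ht
        exact mul_nonneg (hfact_nn s hs) (hSupNN s t hs ht)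
      · filter_upwards [eventually_ge_atTop (0:ℝ)] with t ht
        have h1 : (1 - Real.exp (-s)) * sSup (S s t) ≤ sSup (S s t) :=
          mul_le_of_le_one_left (hSupNN s t hs ht) (hfact_le_one s)
        have h2 : sSup (S s t) ≤ s * Real.exp (-t) := by
          apply csSup_le (hne s t hs)
          rintro x ⟨r, hrmem, rfl⟩
          have hexp : Real.exp (-(K r * t)) ≤ Real.exp (-t) := by
            apply Real.exp_le_exp.2
            have := mul_le_mul_of_nonneg_right (hK1 r) ht
            linarith
          calc E r t = r * Real.exp (-(K r * t)) := rfl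
            _ ≤ s * Real.exp (-t) :=
              mul_le_mul hrmem.2 hexp (Real.exp_pos _).le hs
        linarith
      · have := (Real.tendsto_exp_neg_atTop_nhds_zero).const_mul s
        simpa using this
  · -- (iii)
    intro t₀ t_f htf z hz hz0 hineq t ht
    have hτ : 0 ≤ t - t₀ := sub_nonneg.2 ht.1
    have key : ∀ r ∈ Icc (0:ℝ) (z t₀), E r (t - t₀) ≤ z t := by
      intro r hr
      exact KL_fence α hα_mono hα_zero (K r) r (hKpos r) hr.1 (hKle r) t₀ t_f z hz hr.2
        hineq t ht
    have h1 : (1 - Real.exp (-(z t₀))) * sSup (S (z t₀) (t - t₀)) ≤ sSup (S (z t₀) (t - t₀)) :=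
      mul_le_of_le_one_left (hSupNN _ _ hz0 hτ) (hfact_le_one _)
    have h2 : sSup (S (z t₀) (t - t₀)) ≤ z t := by
      apply csSup_le (hne _ _ hz0)
      rintro x ⟨r, hrmem, rfl⟩
      exact key r hrmem
    exact le_trans h1 h2
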